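/- Let n ≥ 1, let s ∈ ℝⁿ be a unit vector (‖s‖ = 1), and let β, γ > 0. Then for every x ∈ ℝⁿ: exp(−π‖x‖²) · Σ_{k∈ℤ} exp(−π(k − γ⟨s,x⟩)²/β²) = Σ_{k∈ℤ} exp(−πk²/(β²+γ²)) · exp(−π‖x − ⟨s,x⟩·s‖²) · exp(−π·((β²+γ²)/β²)·(⟨s,x⟩ − γk/(β²+γ²))²). (This expresses the unnormalized hCLWE density as a mixture of Gaussians along the secret direction s; here x − ⟨s,x⟩·s is the projection of x onto the orthogonal complement of s.) -/

import Mathlib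

open Real

/-- The unnormalized hCLWE density as a mixture of Gaussians along the secret direction:
for a unit vector `s` and `β, γ > 0`,
`e^{-π‖x‖²} · Σ_k e^{-π(k - γ⟨s,x⟩)²/β²}`
` = Σ_k e^{-πk²/(β²+γ²)} · e^{-π‖x - ⟨s,x⟩s‖²} · e^{-π((β²+γ²)/β²)(⟨s,x⟩ - γk/(β²+γ²))²}`. -/
theorem stmt_6 (n : ℕ) (hn : 1 ≤ n) (s : EuclideanSpace ℝ (Fin n)) (hs : ‖s‖ = 1)
    (β γ : ℝ) (hβ : 0 < β) (hγ : 0 < γ) (x : EuclideanSpace ℝ (Fin n)) :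
    Real.exp (-π * ‖x‖ ^ 2) *
        ∑' k : ℤ, Real.exp (-π * ((k : ℝ) - γ * (inner ℝ s x : ℝ)) ^ 2 / β ^ 2) =
      ∑' k : ℤ,
        Real.exp (-π * (k : ℝ) ^ 2 / (β ^ 2 + γ ^ 2)) *
          Real.exp (-π * ‖x - (inner ℝ s x : ℝ) • s‖ ^ 2) *
          Real.exp (-π * ((β ^ 2 + γ ^ 2) / β ^ 2) *
            ((inner ℝ s x : ℝ) - γ * (k : ℝ) / (β ^ 2 + γ ^ 2)) ^ 2) := by
  set t : ℝ := (inner ℝ s x : ℝ) with ht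
  have hnorm : ‖x - t • s‖ ^ 2 = ‖x‖ ^ 2 - t ^ 2 := by
    have h := @norm_sub_sq_real (EuclideanSpace ℝ (Fin n)) _ _ x (t • s)
    rw [h, norm_smul, real_inner_smul_right, real_inner_comm, ← ht, hs]
    simp [mul_pow]
    ring
  rw [← tsum_mul_left]
  refine tsum_congr fun k => ?_
  rw [← Real.exp_add, ← Real.exp_add, ← Real.exp_add]
  congr 1
  rw [hnorm]
  have hβ2 : (β : ℝ) ^ 2 ≠ 0 := by positivity
  have hβγ : (β : ℝ) ^ 2 + γ ^ 2 ≠ 0 := by positivity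
  field_simp
  ring
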